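/- Let X be finite, S a subsemilattice of T(X), and t, u ∈ X with u ≠ t such that e(t) = t and e(u) ∈ {u, t} for all e ∈ S. Let S* = {g* : g ∈ S} where g*(x) = g(x) if g(x) ≠ u and g*(x) = t otherwise. Then |S| ≤ 2|S*|. -/

import Mathlib

open scoped Classical

def IsSubsemilattice {X : Type*} (S : Set (X → X)) : Prop :=
  S.Nonempty ∧ (∀ e ∈ S, e ∘ e = e) ∧ (∀ e ∈ S, ∀ f ∈ S, e ∘ f = f ∘ e) ∧
    (∀ e ∈ S, ∀ f ∈ S, e ∘ f ∈ S)

noncomputable def star {X : Type*} (t u : X) (g : X → X) : X → X :=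
  fun x => if g x = u then t else g x

theorem card_le_two_mul_card_star {X : Type*} [Fintype X]
    (S : Set (X → X)) (hS : IsSubsemilattice S)
    (t u : X) (hut : u ≠ t)
    (ht : ∀ e ∈ S, e t = t) (hu : ∀ e ∈ S, e u = u ∨ e u = t) :
    S.ncard ≤ 2 * (star t u '' S).ncard := by
  classical
  obtain ⟨hne, hidem, hcomm, hclosed⟩ := hS
  set A : Set (X → X) := {g | g ∈ S ∧ g u = u} with hA
  set B : Set (X → X) := {g | g ∈ S ∧ g u = t} with hB
  have hAS : A ⊆ S := fun g hg => hg.1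
  have hBS : B ⊆ S := fun g hg => hg.1
  have hsub : S ⊆ A ∪ B := by
    intro g hg
    rcases hu g hg with h | h
    · exact Or.inl ⟨hg, h⟩
    · exact Or.inr ⟨hg, h⟩
  -- injectivity on A
  have hinjA : Set.InjOn (_root_.star t u) A := by
    rintro g ⟨hgS, hgu⟩ h ⟨hhS, hhu⟩ heq
    funext x
    by_contra hne'
    have hx := congrFun heq x
    simp only [_root_.star] at hx
    by_cases hgx : g x = u
    · have hhx : h x ≠ u := fun h' => hne' (hgx.trans h'.symm)
      rw [if_pos hgx, if_neg hhx] at hx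
      -- hx : t = h x
      have hcg := congrFun (hcomm g hgS h hhS) x
      simp only [Function.comp] at hcg
      rw [← hx, hgx, ht g hgS, hhu] at hcg
      exact hut hcg.symm
    · by_cases hhx : h x = u
      · rw [if_neg hgx, if_pos hhx] at hx
        have hcg := congrFun (hcomm g hgS h hhS) x
        simp only [Function.comp] at hcg
        rw [hx, hhx, ht h hhS, hgu] at hcg
        exact hut hcg
      · rw [if_neg hgx, if_neg hhx] at hx
        exact hne' hx
  -- on B, star is the identity
  have hstarB : ∀ g ∈ B, _root_.star t u g = g := by
    rintro g ⟨hgS, hgu⟩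
    funext x
    simp only [_root_.star]
    rw [if_neg]
    intro hgx
    have := congrFun (hidem g hgS) x
    simp only [Function.comp] at this
    rw [hgx] at this
    -- this : g u = g x
    rw [hgu] at this
    exact hut this.symm
  have hinjB : Set.InjOn (_root_.star t u) B := by
    intro g hg h hh heq
    rw [hstarB g hg, hstarB h hh] at heq
    exact heq
  have hfinS : (_root_.star t u '' S).Finite := Set.toFinite _
  have h1 : A.ncard = (_root_.star t u '' A).ncard := (Set.ncard_image_of_injOn hinjA).symm
  have h2 : B.ncard = (_root_.star t u '' B).ncard := (Set.ncard_image_of_injOn hinjB).symm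
  have h3 : (_root_.star t u '' A).ncard ≤ (_root_.star t u '' S).ncard :=
    Set.ncard_le_ncard (Set.image_mono (f := _root_.star t u) hAS) hfinS
  have h4 : (_root_.star t u '' B).ncard ≤ (_root_.star t u '' S).ncard :=
    Set.ncard_le_ncard (Set.image_mono (f := _root_.star t u) hBS) hfinS
  have h5 : S.ncard ≤ (A ∪ B).ncard := Set.ncard_le_ncard hsub (Set.toFinite _)
  have h6 : (A ∪ B).ncard ≤ A.ncard + B.ncard := Set.ncard_union_le _ _
  omega
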